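/- For a subset L ⊆ ℕ the following are equivalent: (1) L is recognizable, i.e., L = φ⁻¹(Z) for some additive monoid homomorphism φ : ℕ → M into a finite additive monoid M and some Z ⊆ M; (2) L is the union of a finite subset of ℕ and finitely many (possibly zero) arithmetic progressions, i.e., there exist a finite set F ⊆ ℕ, an n ∈ ℕ, and a_1,…,a_n ∈ ℕ, k_1,…,k_n ≥ 1 such that L = F ∪ ⋃_{i=1}^{n} {a_i + k_i·m | m ∈ ℕ}. -/

import Mathlib

/-- A subset `L ⊆ ℕ` is recognizable if it is the inverse image of some subset of a
finite additive monoid under an additive monoid homomorphism. -/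
def Recognizable (L : Set ℕ) : Prop :=
  ∃ (M : Type) (_ : AddMonoid M) (_ : Finite M) (φ : ℕ →+ M) (Z : Set M),
    L = φ ⁻¹' Z

def EvPer (L : Set ℕ) : Prop :=
  ∃ N p : ℕ, 1 ≤ p ∧ ∀ n, N ≤ n → (n ∈ L ↔ n + p ∈ L)

lemma evper_iter {L : Set ℕ} {N p : ℕ}
    (h : ∀ n, N ≤ n → (n ∈ L ↔ n + p ∈ L)) :
    ∀ m n, N ≤ n → (n ∈ L ↔ n + p * m ∈ L) := by
  intro m
  induction m with
  | zero => simp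
  | succ m ih =>
    intro n hn
    have h2 := h (n + p * m) (le_trans hn (Nat.le_add_right _ _))
    have heq : n + p * m + p = n + p * (m + 1) := by ring
    rw [ih n hn, h2, heq]

lemma evper_mod {L : Set ℕ} {N p : ℕ} (hp : 1 ≤ p)
    (h : ∀ n, N ≤ n → (n ∈ L ↔ n + p ∈ L)) {x y : ℕ}
    (hx : N ≤ x) (hy : N ≤ y) (hm : x % p = y % p) : (x ∈ L ↔ y ∈ L) := by
  rcases le_total x y with hle | hle
  · have hd : p ∣ y - x := (Nat.modEq_iff_dvd' hle).mp hm
    obtain ⟨m, hm'⟩ := hd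
    have : y = x + p * m := by omega
    rw [this]; exact evper_iter h m x hx
  · have hd : p ∣ x - y := (Nat.modEq_iff_dvd' hle).mp hm.symm
    obtain ⟨m, hm'⟩ := hd
    have : x = y + p * m := by omega
    rw [this]; exact (evper_iter h m y hy).symm

lemma recog_to_evper {L : Set ℕ} (h : Recognizable L) : EvPer L := by
  obtain ⟨M, _, _, φ, Z, rfl⟩ := h
  obtain ⟨i, j, hne, heq⟩ := Finite.exists_ne_map_eq_of_infinite (fun n : ℕ => φ n)
  wlog hij : i < j generalizing i j
  · exact this j i hne.symm heq.symm (by omega)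
  refine ⟨i, j - i, by omega, fun n hn => ?_⟩
  have key : φ (n + (j - i)) = φ n := by
    have h1 : n + (j - i) = (n - i) + j := by omega
    have h2 : n = (n - i) + i := by omega
    rw [h1, map_add, ← heq, ← map_add, ← h2]
  simp only [Set.mem_preimage, key]

lemma evper_to_recog {L : Set ℕ} (h : EvPer L) : Recognizable L := by
  obtain ⟨N, p, hp, hper⟩ := h
  set r : ℕ → ℕ → Prop := fun x y => x = N ∧ y = N + p with hr
  set c : AddCon ℕ := addConGen r with hc
  -- upper bound congruence
  set s : AddCon ℕ :=
    { r := fun x y => x = y ∨ (N ≤ x ∧ N ≤ y ∧ x % p = y % p)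
      iseqv := ⟨fun x => Or.inl rfl,
        by rintro x y (rfl | ⟨h1, h2, h3⟩)
           · exact Or.inl rfl
           · exact Or.inr ⟨h2, h1, h3.symm⟩,
        by rintro x y z (rfl | ⟨h1, h2, h3⟩) (rfl | ⟨h4, h5, h6⟩)
           · exact Or.inl rfl
           · exact Or.inr ⟨h4, h5, h6⟩
           · exact Or.inr ⟨h1, h2, h3⟩
           · exact Or.inr ⟨h1, h5, h3.trans h6⟩⟩
      add' := by
        rintro w x y z (rfl | ⟨h1, h2, h3⟩) (rfl | ⟨h4, h5, h6⟩)
        · exact Or.inl rfl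
        · exact Or.inr ⟨by omega, by omega, Nat.ModEq.add_left w h6⟩
        · exact Or.inr ⟨by omega, by omega, Nat.ModEq.add_right y h3⟩
        · exact Or.inr ⟨by omega, by omega, Nat.ModEq.add h3 h6⟩ } with hs
  have hle : c ≤ s := by
    apply AddCon.addConGen_le.mpr
    rintro x y ⟨rfl, rfl⟩
    exact Or.inr ⟨le_refl _, by omega, (Nat.add_mod_right _ _).symm⟩
  have hbase : c N (N + p) := AddConGen.Rel.of _ _ ⟨rfl, rfl⟩
  have hstep : ∀ n, N ≤ n → c n (n + p) := by
    intro n hn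
    have := c.add hbase (c.refl (n - N))
    have e1 : N + (n - N) = n := by omega
    have e2 : N + p + (n - N) = n + p := by omega
    rwa [e1, e2] at this
  refine ⟨c.Quotient, inferInstance, ?_, c.mk', c.mk' '' L, ?_⟩
  · refine Finite.of_surjective (fun i : Fin (N + p) => c.mk' (i : ℕ)) ?_
    intro q
    obtain ⟨n, rfl⟩ := c.mk'_surjective q
    induction n using Nat.strong_induction_on with
    | _ n ih =>
      by_cases hlt : n < N + p
      · exact ⟨⟨n, hlt⟩, rfl⟩
      · push_neg at hlt
        obtain ⟨i, hi⟩ := ih (n - p) (by omega)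
        refine ⟨i, hi.trans ?_⟩
        have := hstep (n - p) (by omega)
        have e : n - p + p = n := by omega
        rw [e] at this
        exact (AddCon.eq c).mpr this
  · ext x
    simp only [Set.mem_preimage, Set.mem_image]
    constructor
    · intro hx; exact ⟨x, hx, rfl⟩
    · rintro ⟨y, hy, hxy⟩
      have hcyx : c y x := (AddCon.eq c).mp hxy
      rcases hle hcyx with rfl | ⟨h1, h2, h3⟩
      · exact hy
      · exact (evper_mod hp hper h1 h2 h3).mp hy

lemma evper_to_union {L : Set ℕ} (h : EvPer L) :
    ∃ F : Set ℕ, F.Finite ∧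
      ∃ (n : ℕ) (a k : Fin n → ℕ), (∀ i, 1 ≤ k i) ∧
        L = F ∪ ⋃ i : Fin n, {x : ℕ | ∃ m : ℕ, x = a i + k i * m} := by
  classical
  obtain ⟨N, p, hp, hper⟩ := h
  refine ⟨L ∩ Set.Iio N, (Set.finite_Iio N).subset Set.inter_subset_right, ?_⟩
  by_cases hex : ∃ x ∈ L, N ≤ x
  · obtain ⟨x0, hx0L, hx0N⟩ := hex
    refine ⟨p, fun r => if N + (r : ℕ) ∈ L then N + (r : ℕ) else x0, fun _ => p,
      fun _ => hp, ?_⟩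
    ext y
    simp only [Set.mem_union, Set.mem_inter_iff, Set.mem_Iio, Set.mem_iUnion,
      Set.mem_setOf_eq]
    constructor
    · intro hy
      by_cases hyN : y < N
      · exact Or.inl ⟨hy, hyN⟩
      · push_neg at hyN
        refine Or.inr ⟨⟨(y - N) % p, Nat.mod_lt _ hp⟩, (y - N) / p, ?_⟩
        have hdm := Nat.div_add_mod (y - N) p
        have hyeq : y = N + (y - N) % p + p * ((y - N) / p) := by omega
        have hmem : N + (y - N) % p ∈ L := by
          have := evper_iter hper ((y - N) / p) (N + (y - N) % p) (by omega)
          rw [this, ← hyeq]; exact hy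
        rw [if_pos hmem]
        exact hyeq
    · rintro (⟨hy, _⟩ | ⟨r, m, rfl⟩)
      · exact hy
      · by_cases hr : N + (r : ℕ) ∈ L
        · rw [if_pos hr] at *
          exact (evper_iter hper m (N + (r : ℕ)) (by omega)).mp hr
        · rw [if_neg hr] at *
          exact (evper_iter hper m x0 hx0N).mp hx0L
  · push_neg at hex
    refine ⟨0, Fin.elim0, Fin.elim0, fun i => i.elim0, ?_⟩
    simp only [Set.iUnion_of_empty, Set.union_empty]
    ext y
    simp only [Set.mem_inter_iff, Set.mem_Iio]
    exact ⟨fun hy => ⟨hy, hex y hy⟩, fun hy => hy.1⟩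

lemma union_to_evper {L : Set ℕ} {F : Set ℕ} (hF : F.Finite) {n : ℕ}
    {a k : Fin n → ℕ} (hk : ∀ i, 1 ≤ k i)
    (hL : L = F ∪ ⋃ i : Fin n, {x : ℕ | ∃ m : ℕ, x = a i + k i * m}) :
    EvPer L := by
  obtain ⟨B, hB⟩ := (hF.bddAbove)
  set A : ℕ := Finset.univ.sup a with hA
  set N : ℕ := max (B + 1) A with hN
  set p : ℕ := ∏ i, k i with hpdef
  have hp : 1 ≤ p := Finset.one_le_prod' (fun i _ => hk i)
  have hdvd : ∀ i, k i ∣ p := fun i => Finset.dvd_prod_of_mem k (Finset.mem_univ i)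
  have haN : ∀ i, a i ≤ N := fun i =>
    le_trans (Finset.le_sup (Finset.mem_univ i)) (le_max_right _ _)
  refine ⟨N, p, hp, fun m hm => ?_⟩
  have hnF : ∀ x, N ≤ x → x ∉ F := by
    intro x hx hxF
    have := hB hxF
    omega
  subst hL
  simp only [Set.mem_union, Set.mem_iUnion, Set.mem_setOf_eq]
  constructor
  · rintro (hmF | ⟨i, t, rfl⟩)
    · exact absurd hmF (hnF m hm)
    · refine Or.inr ⟨i, t + p / k i, ?_⟩
      have hc : k i * (p / k i) = p := Nat.mul_div_cancel' (hdvd i)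
      have hd : k i * (t + p / k i) = k i * t + p := by rw [Nat.mul_add, hc]
      omega
  · rintro (hmF | ⟨i, t, hmt⟩)
    · exact absurd hmF (hnF (m + p) (by omega))
    · have hki := hdvd i
      obtain ⟨q, hq⟩ := hki
      have ham : a i ≤ m := le_trans (haN i) hm
      have hdiv : k i ∣ m - a i := by
        have h1 : m - a i = k i * t - p := by omega
        rw [h1, hq]
        exact Nat.dvd_sub (Dvd.intro t rfl) (Dvd.intro q rfl)
      obtain ⟨u, hu⟩ := hdiv
      exact Or.inr ⟨i, u, by omega⟩

theorem stmt_9 (L : Set ℕ) :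
    Recognizable L ↔
      ∃ F : Set ℕ, F.Finite ∧
        ∃ (n : ℕ) (a k : Fin n → ℕ), (∀ i, 1 ≤ k i) ∧
          L = F ∪ ⋃ i : Fin n, {x : ℕ | ∃ m : ℕ, x = a i + k i * m} := by
  constructor
  · intro h
    exact evper_to_union (recog_to_evper h)
  · rintro ⟨F, hF, n, a, k, hk, hL⟩
    exact evper_to_recog (union_to_evper hF hk hL)
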